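/- Convexity is preserved by the POMDP Bellman operator: if V : Π(S) → ℝ is convex, then the map π ↦ Σ_{k∈O} σ(k|π,a) · V(Γ(π,a,k)) is convex in π (where a term is interpreted as 0 when σ(k|π,a) = 0). Consequently, π ↦ Σ_j π(j) r(j,a) + β Σ_k σ(k|π,a) V(Γ(π,a,k)) is convex in π for each action a and β ≥ 0. -/

import Mathlib

open Finset

lemma convexOn_finset_sum {E : Type*} [AddCommMonoid E] [Module ℝ E]
    {ι : Type*} (t : Finset ι) {s : Set E} (hs : Convex ℝ s) (f : ι → E → ℝ)
    (h : ∀ i ∈ t, ConvexOn ℝ s (f i)) :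
    ConvexOn ℝ s (fun x => ∑ i ∈ t, f i x) := by
  induction t using Finset.cons_induction with
  | empty => simpa using convexOn_const 0 hs
  | cons a t ha ih =>
    simp only [Finset.sum_cons]
    exact (h a (Finset.mem_cons_self a t)).add
      (ih fun i hi => h i (Finset.mem_cons_of_mem hi))

lemma term_convex (n K : ℕ) (P : Fin n → Fin n → ℝ) (Q : Fin n → Fin K → ℝ)
    (hPnn : ∀ i j, 0 ≤ P i j)
    (hQnn : ∀ i k, 0 ≤ Q i k)
    (V : (Fin n → ℝ) → ℝ) (hV : ConvexOn ℝ (stdSimplex ℝ (Fin n)) V) (k : Fin K) :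
    ConvexOn ℝ (stdSimplex ℝ (Fin n))
      (fun π => (if (∑ j, ∑ i, π i * P i j * Q i k) = 0 then 0 else
          (∑ j, ∑ i, π i * P i j * Q i k) *
            V (fun l => (∑ i, π i * P i l * Q i k) / (∑ j, ∑ i, π i * P i j * Q i k)))) := by
  set g : (Fin n → ℝ) → Fin n → ℝ := fun π l => ∑ i, π i * P i l * Q i k with hg
  set s : (Fin n → ℝ) → ℝ := fun π => ∑ l, g π l with hsdef
  have gnn : ∀ π, π ∈ stdSimplex ℝ (Fin n) → ∀ l, 0 ≤ g π l := by
    intro π hπ l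
    exact Finset.sum_nonneg fun i _ => mul_nonneg (mul_nonneg (hπ.1 i) (hPnn i l)) (hQnn i k)
  have snn : ∀ π, π ∈ stdSimplex ℝ (Fin n) → 0 ≤ s π := by
    intro π hπ; exact Finset.sum_nonneg fun l _ => gnn π hπ l
  have szero : ∀ π, π ∈ stdSimplex ℝ (Fin n) → s π = 0 → ∀ l, g π l = 0 := by
    intro π hπ hs l
    exact (Finset.sum_eq_zero_iff_of_nonneg (fun l _ => gnn π hπ l)).1 hs l (Finset.mem_univ l)
  have glin : ∀ (π ρ : Fin n → ℝ) (a b : ℝ) (l : Fin n),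
      g (a • π + b • ρ) l = a * g π l + b * g ρ l := by
    intro π ρ a b l
    simp only [hg, Pi.add_apply, Pi.smul_apply, smul_eq_mul, Finset.mul_sum]
    rw [← Finset.sum_add_distrib]
    exact Finset.sum_congr rfl fun i _ => by ring
  have slin : ∀ (π ρ : Fin n → ℝ) (a b : ℝ),
      s (a • π + b • ρ) = a * s π + b * s ρ := by
    intro π ρ a b
    simp only [hsdef, Finset.mul_sum]
    rw [← Finset.sum_add_distrib]
    exact Finset.sum_congr rfl fun l _ => glin π ρ a b l
  have post_mem : ∀ π, π ∈ stdSimplex ℝ (Fin n) → s π ≠ 0 →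
      (fun l => g π l / s π) ∈ stdSimplex ℝ (Fin n) := by
    intro π hπ hs
    refine ⟨fun l => div_nonneg (gnn π hπ l) (snn π hπ), ?_⟩
    rw [← Finset.sum_div]
    exact div_self hs
  constructor
  · exact convex_stdSimplex ℝ (Fin n)
  intro π hπ ρ hρ a b ha hb hab
  have hc : a • π + b • ρ ∈ stdSimplex ℝ (Fin n) :=
    (convex_stdSimplex ℝ (Fin n)) hπ hρ ha hb hab
  show (if s (a • π + b • ρ) = 0 then 0 else
      s (a • π + b • ρ) * V (fun l => g (a • π + b • ρ) l / s (a • π + b • ρ))) ≤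
    a • (if s π = 0 then (0:ℝ) else s π * V (fun l => g π l / s π)) +
    b • (if s ρ = 0 then (0:ℝ) else s ρ * V (fun l => g ρ l / s ρ))
  by_cases hsc : s (a • π + b • ρ) = 0
  · rw [if_pos hsc]
    have h1 : a * s π + b * s ρ = 0 := by rw [← slin]; exact hsc
    have h2 : a * s π = 0 ∧ b * s ρ = 0 := by
      constructor <;> nlinarith [mul_nonneg ha (snn π hπ), mul_nonneg hb (snn ρ hρ)]
    have e1 : a • (if s π = 0 then (0:ℝ) else s π * V (fun l => g π l / s π)) = 0 := by
      rcases mul_eq_zero.1 h2.1 with h | h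
      · simp [h]
      · simp [h]
    have e2 : b • (if s ρ = 0 then (0:ℝ) else s ρ * V (fun l => g ρ l / s ρ)) = 0 := by
      rcases mul_eq_zero.1 h2.2 with h | h
      · simp [h]
      · simp [h]
    rw [e1, e2]; norm_num
  · rw [if_neg hsc]
    have hscpos : 0 < s (a • π + b • ρ) := lt_of_le_of_ne (snn _ hc) (Ne.symm hsc)
    by_cases hsπ : s π = 0
    · -- g π = 0, so everything comes from ρ
      have hgπ := szero π hπ hsπ
      have hsc' : s (a • π + b • ρ) = b * s ρ := by rw [slin, hsπ]; ring
      have hbρ : b * s ρ ≠ 0 := hsc' ▸ hsc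
      have hb0 : b ≠ 0 := fun h => hbρ (by simp [h])
      have hsρ : s ρ ≠ 0 := fun h => hbρ (by simp [h])
      have hpost : (fun l => g (a • π + b • ρ) l / s (a • π + b • ρ)) =
          (fun l => g ρ l / s ρ) := by
        funext l
        rw [glin, hgπ l, hsc']
        rw [mul_zero, zero_add, mul_div_mul_left _ _ hb0]
      rw [hpost, if_pos hsπ, if_neg hsρ, hsc']
      simp only [smul_eq_mul, mul_zero, zero_add]
      exact le_of_eq (mul_assoc b (s ρ) _)
    · by_cases hsρ : s ρ = 0
      · have hgρ := szero ρ hρ hsρ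
        have hsc' : s (a • π + b • ρ) = a * s π := by rw [slin, hsρ]; ring
        have haπ : a * s π ≠ 0 := hsc' ▸ hsc
        have ha0 : a ≠ 0 := fun h => haπ (by simp [h])
        have hpost : (fun l => g (a • π + b • ρ) l / s (a • π + b • ρ)) =
            (fun l => g π l / s π) := by
          funext l
          rw [glin, hgρ l, hsc']
          rw [mul_zero, add_zero, mul_div_mul_left _ _ ha0]
        rw [hpost, if_pos hsρ, if_neg hsπ, hsc']
        simp only [smul_eq_mul, mul_zero, add_zero]
        exact le_of_eq (mul_assoc a (s π) _)
      · -- both positive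
        have hπpos : 0 < s π := lt_of_le_of_ne (snn π hπ) (Ne.symm hsπ)
        have hρpos : 0 < s ρ := lt_of_le_of_ne (snn ρ hρ) (Ne.symm hsρ)
        set x : Fin n → ℝ := fun l => g π l / s π with hx
        set y : Fin n → ℝ := fun l => g ρ l / s ρ with hy
        have hxm := post_mem π hπ hsπ
        have hym := post_mem ρ hρ hsρ
        set sc := s (a • π + b • ρ) with hscd
        set w1 := a * s π / sc with hw1
        set w2 := b * s ρ / sc with hw2
        have hw1n : 0 ≤ w1 := div_nonneg (mul_nonneg ha hπpos.le) hscpos.le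
        have hw2n : 0 ≤ w2 := div_nonneg (mul_nonneg hb hρpos.le) hscpos.le
        have hwsum : w1 + w2 = 1 := by
          rw [hw1, hw2, ← add_div, hscd, slin, div_self]
          rw [← slin]; exact hsc
        have hpost : (fun l => g (a • π + b • ρ) l / sc) = w1 • x + w2 • y := by
          funext l
          simp only [Pi.add_apply, Pi.smul_apply, smul_eq_mul, hx, hy, hw1, hw2]
          rw [glin]
          field_simp
        rw [if_neg hsπ, if_neg hsρ]
        rw [hpost]
        have hVle := hV.2 hxm hym hw1n hw2n hwsum
        have := mul_le_mul_of_nonneg_left hVle hscpos.le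
        calc sc * V (w1 • x + w2 • y) ≤ sc * (w1 • V x + w2 • V y) := this
          _ = a • (s π * V x) + b • (s ρ * V y) := by
              simp only [smul_eq_mul, hw1, hw2]
              field_simp

open Finset in
theorem bellman_preserves_convexity
    (n K : ℕ) (P : Fin n → Fin n → ℝ) (Q : Fin n → Fin K → ℝ)
    (hPnn : ∀ i j, 0 ≤ P i j) (hProw : ∀ i, ∑ j, P i j = 1)
    (hQnn : ∀ i k, 0 ≤ Q i k) (hQrow : ∀ i, ∑ k, Q i k = 1)
    (V : (Fin n → ℝ) → ℝ) (hV : ConvexOn ℝ (stdSimplex ℝ (Fin n)) V)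
    (r : Fin n → ℝ) (β : ℝ) (hβ : 0 ≤ β) :
    ConvexOn ℝ (stdSimplex ℝ (Fin n))
      (fun π => ∑ k, (if (∑ j, ∑ i, π i * P i j * Q i k) = 0 then 0 else
          (∑ j, ∑ i, π i * P i j * Q i k) *
            V (fun l => (∑ i, π i * P i l * Q i k) / (∑ j, ∑ i, π i * P i j * Q i k)))) ∧
    ConvexOn ℝ (stdSimplex ℝ (Fin n))
      (fun π => (∑ j, π j * r j) + β *
        ∑ k, (if (∑ j, ∑ i, π i * P i j * Q i k) = 0 then 0 else
          (∑ j, ∑ i, π i * P i j * Q i k) *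
            V (fun l => (∑ i, π i * P i l * Q i k) / (∑ j, ∑ i, π i * P i j * Q i k)))) := by
  have h1 : ConvexOn ℝ (stdSimplex ℝ (Fin n))
      (fun π => ∑ k, (if (∑ j, ∑ i, π i * P i j * Q i k) = 0 then 0 else
          (∑ j, ∑ i, π i * P i j * Q i k) *
            V (fun l => (∑ i, π i * P i l * Q i k) / (∑ j, ∑ i, π i * P i j * Q i k)))) := by
    exact convexOn_finset_sum Finset.univ (convex_stdSimplex ℝ (Fin n)) _
      (fun k _ => term_convex n K P Q hPnn hQnn V hV k)
  refine ⟨h1, ?_⟩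
  have hlin : ConvexOn ℝ (stdSimplex ℝ (Fin n)) (fun π : Fin n → ℝ => ∑ j, π j * r j) := by
    refine ⟨convex_stdSimplex ℝ (Fin n), ?_⟩
    intro π hπ ρ hρ a b ha hb hab
    apply le_of_eq
    simp only [Pi.add_apply, Pi.smul_apply, smul_eq_mul, Finset.mul_sum]
    rw [← Finset.sum_add_distrib]
    exact Finset.sum_congr rfl fun j _ => by ring
  exact hlin.add (h1.smul hβ)
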